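/- Let T^{(1)}_ℓ(λ) := S^{(ℓ)}_{1,1}(λ q^{−(ℓ−1)/2}) and T^{(a)}_1(λ) := (−1)^{a+1} τ^{(a)}(λ q^{−(a−1)/2}), where S^{(ℓ)} is the ordered product of Stokes matrices as above. Then T^{(1)}_{ℓ+1}(λ) equals the quantum Jacobi-Trudi determinant det( T^{(1−i+j)}_1(λ q^{(ℓ+2−i−j)/2}) )_{1≤i,j≤ℓ+1}, with T^{(0)}_1 = 1 and T^{(a)}_1 = 0 for a < 0 or a ≥ n+2. -/

import Mathlib

/-- The Stokes matrix `S^{(1)}(λ)` of the paper (eq. (sk0form)). -/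
noncomputable def stokesMat (n : ℕ) (τ : ℤ → ℂ → ℂ) (lam : ℂ) :
    Matrix (Fin (n + 1)) (Fin (n + 1)) ℂ :=
  Matrix.of fun i j =>
    if (j : ℕ) = 0 then τ ((i : ℕ) + 1 : ℤ) lam
    else if (j : ℕ) = (i : ℕ) + 1 then 1 else 0

/-- `S^{(ℓ)}(λ) = S^{(1)}(λq^{ℓ-1}) ⋯ S^{(1)}(λ)`. -/
noncomputable def Sprod (n : ℕ) (τ : ℤ → ℂ → ℂ) (q : ℂ) :
    ℕ → ℂ → Matrix (Fin (n + 1)) (Fin (n + 1)) ℂ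
  | 0, _ => 1
  | l + 1, lam => stokesMat n τ (lam * q ^ l) * Sprod n τ q l lam

noncomputable def Emat (Ta1 : ℤ → ℂ → ℂ) (s : ℂ) (a l : ℕ) (lam : ℂ) :
    Matrix (Fin (l + 1)) (Fin (l + 1)) ℂ :=
  Matrix.of fun i j =>
    if (i : ℕ) = 0 then Ta1 ((a : ℤ) + (j : ℤ)) (lam * s ^ ((l : ℤ) + (a : ℤ) - 1 - (j : ℤ)))
    else Ta1 (1 - (i : ℤ) + (j : ℤ)) (lam * s ^ ((l : ℤ) - (i : ℤ) - (j : ℤ)))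

lemma TE (Ta1 : ℤ → ℂ → ℂ) {s : ℂ} (hs : s ≠ 0) (lam : ℂ) {x y p q r : ℤ}
    (h1 : x = y) (h2 : p + q = r) :
    Ta1 x (lam * s ^ p * s ^ q) = Ta1 y (lam * s ^ r) := by
  subst h1
  rw [mul_assoc, ← zpow_add₀ hs, h2]

lemma stokes_col0 (n : ℕ) (τ : ℤ → ℂ → ℂ) (lam : ℂ) (i : Fin (n + 1)) :
    stokesMat n τ lam i 0 = τ ((i : ℕ) + 1 : ℤ) lam := by
  simp [stokesMat]

lemma stokes_other (n : ℕ) (τ : ℤ → ℂ → ℂ) (lam : ℂ) (i k : Fin (n + 1))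
    (hk : (k : ℕ) ≠ 0) :
    stokesMat n τ lam i k = if (k : ℕ) = (i : ℕ) + 1 then 1 else 0 := by
  simp only [stokesMat, Matrix.of_apply, if_neg hk]

set_option maxHeartbeats 1600000 in
lemma key (n : ℕ) (τ : ℤ → ℂ → ℂ) (s : ℂ) (hs : s ≠ 0) (Ta1 : ℤ → ℂ → ℂ)
    (hTa1 : ∀ a : ℕ, 1 ≤ a → a ≤ n + 1 → ∀ lam : ℂ,
      Ta1 (a : ℤ) lam = (-1 : ℂ) ^ (a + 1) * τ (a : ℤ) (lam * s ^ (-((a : ℤ) - 1))))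
    (hTa10 : ∀ lam, Ta1 0 lam = 1)
    (hTa1z : ∀ a : ℤ, (a < 0 ∨ (n : ℤ) + 2 ≤ a) → ∀ lam, Ta1 a lam = 0) :
    ∀ (l a : ℕ) (ha1 : 1 ≤ a) (ha2 : a ≤ n + 1) (lam : ℂ),
      (Emat Ta1 s a l lam).det
        = (-1 : ℂ) ^ (a + 1) *
          Sprod n τ (s ^ 2) (l + 1) (lam * s ^ (-(l : ℤ)))
            ⟨a - 1, by omega⟩ 0 := by
  intro l
  induction l with
  | zero =>
    intro a ha1 ha2 lam
    have e1 : (Emat Ta1 s a 0 lam).det = Ta1 (a : ℤ) (lam * s ^ ((a : ℤ) - 1)) := by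
      rw [Matrix.det_fin_one]
      simp only [Emat, Matrix.of_apply]
      norm_num
    rw [e1, hTa1 a ha1 ha2]
    have e2 : lam * s ^ ((a : ℤ) - 1) * s ^ (-((a : ℤ) - 1)) = lam := by
      rw [mul_assoc, ← zpow_add₀ hs]; simp
    rw [e2]
    have e3 : Sprod n τ (s ^ 2) (0 + 1) (lam * s ^ (-((0 : ℕ) : ℤ)))
        = stokesMat n τ (lam * s ^ (-((0 : ℕ) : ℤ)) * (s ^ 2) ^ 0) * 1 := rfl
    rw [e3, Matrix.mul_one]
    simp only [stokesMat, Matrix.of_apply]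
    norm_num
    congr 2
    push_cast
    omega
  | succ l ih =>
    intro a ha1 ha2 lam
    set A := Emat Ta1 s a (l + 1) lam with hA
    set μ : ℂ := lam * s ^ (-((l + 1 : ℕ) : ℤ)) with hμ
    -- column-0 Laplace expansion
    rw [Matrix.det_succ_column_zero, Fin.sum_univ_succ, Fin.sum_univ_succ]
    -- tail vanishes
    have htail : ∀ i : Fin l, A i.succ.succ 0 = 0 := by
      intro i
      show Emat Ta1 s a (l + 1) lam i.succ.succ 0 = 0
      simp only [Emat, Matrix.of_apply, Fin.val_succ, Fin.val_zero]
      rw [if_neg (by omega)]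
      apply hTa1z
      left
      push_cast
      omega
    have htail' : (∑ i : Fin l, (-1 : ℂ) ^ ((i.succ.succ : Fin (l + 2)) : ℕ) *
        A i.succ.succ 0 * (A.submatrix i.succ.succ.succAbove Fin.succ).det) = 0 := by
      apply Finset.sum_eq_zero
      intro i _
      rw [htail i]
      ring
    rw [htail']
    -- entries of column 0
    have hA00 : A 0 0 = Ta1 (a : ℤ) (lam * s ^ (((l + 1 : ℕ) : ℤ) + (a : ℤ) - 1)) := by
      show Emat Ta1 s a (l + 1) lam 0 0 = _
      simp only [Emat, Matrix.of_apply, Fin.val_zero, if_pos]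
      norm_num
    have hA10 : A 1 0 = 1 := by
      show Emat Ta1 s a (l + 1) lam 1 0 = 1
      have h1 : ((1 : Fin (l + 2)) : ℕ) = 1 := rfl
      have h0 : ((0 : Fin (l + 2)) : ℕ) = 0 := rfl
      simp only [Emat, Matrix.of_apply, h1, h0]
      norm_num [hTa10]
    -- first minor
    have hsub0 : A.submatrix (Fin.succAbove 0) Fin.succ = Emat Ta1 s 1 l (lam * s ^ (-1 : ℤ)) := by
      ext i j
      show A ((0 : Fin (l + 2)).succAbove i) j.succ = _
      rw [Fin.succAbove_zero]
      show Emat Ta1 s a (l + 1) lam i.succ j.succ = Emat Ta1 s 1 l (lam * s ^ (-1 : ℤ)) i j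
      simp only [Emat, Matrix.of_apply, Fin.val_succ]
      rw [if_neg (by omega)]
      by_cases hi : (i : ℕ) = 0
      · rw [if_pos hi]
        have hi' : ((i : ℕ) : ℤ) = 0 := by exact_mod_cast hi
        refine (TE Ta1 hs lam ?_ ?_).symm
        · push_cast; omega
        · push_cast; omega
      · rw [if_neg hi]
        refine (TE Ta1 hs lam ?_ ?_).symm
        · push_cast; ring
        · push_cast; ring
    -- second minor
    have hsub1 : A.submatrix (Fin.succAbove 1) Fin.succ
        = Emat Ta1 s (a + 1) l (lam * s ^ (-1 : ℤ)) := by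
      ext i j
      show A ((1 : Fin (l + 2)).succAbove i) j.succ = _
      induction i using Fin.cases with
      | zero =>
        have h0 : (1 : Fin (l + 2)).succAbove 0 = 0 := by
          rw [Fin.succAbove_of_castSucc_lt]
          · rfl
          · simp [Fin.lt_def]
        rw [h0]
        show Emat Ta1 s a (l + 1) lam 0 j.succ = Emat Ta1 s (a + 1) l (lam * s ^ (-1 : ℤ)) 0 j
        simp only [Emat, Matrix.of_apply, Fin.val_zero, Fin.val_succ, if_pos]
        refine (TE Ta1 hs lam ?_ ?_).symm
        · push_cast; ring
        · push_cast; ring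
      | succ k =>
        have h1 : (1 : Fin (l + 2)).succAbove k.succ = k.succ.succ := by
          rw [Fin.succAbove_of_le_castSucc]
          simp [Fin.le_def]
        rw [h1]
        show Emat Ta1 s a (l + 1) lam k.succ.succ j.succ
            = Emat Ta1 s (a + 1) l (lam * s ^ (-1 : ℤ)) k.succ j
        simp only [Emat, Matrix.of_apply, Fin.val_succ]
        rw [if_neg (by omega), if_neg (by omega)]
        refine (TE Ta1 hs lam ?_ ?_).symm
        · push_cast; ring
        · push_cast; ring
    have hmu1 : lam * s ^ (-1 : ℤ) * s ^ (-(l : ℤ)) = μ := by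
      rw [mul_assoc, ← zpow_add₀ hs, hμ]
      congr 1
      push_cast
      ring
    -- apply IH to first minor
    have hd0 : (A.submatrix (Fin.succAbove 0) Fin.succ).det
        = Sprod n τ (s ^ 2) (l + 1) μ 0 0 := by
      rw [hsub0, ih 1 le_rfl (by omega) (lam * s ^ (-1 : ℤ)), hmu1]
      norm_num
    set N := Sprod n τ (s ^ 2) (l + 1) μ with hN
    -- rewrite A 0 0 in terms of τ
    have harg : τ (a : ℤ) (lam * s ^ (((l + 1 : ℕ) : ℤ) + (a : ℤ) - 1) * s ^ (-((a : ℤ) - 1)))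
        = τ (a : ℤ) (lam * s ^ ((l + 1 : ℕ) : ℤ)) :=
      TE τ hs lam rfl (by push_cast; ring)
    have hA00' : A 0 0 = (-1 : ℂ) ^ (a + 1) * τ (a : ℤ) (lam * s ^ ((l + 1 : ℕ) : ℤ)) := by
      rw [hA00, hTa1 a ha1 ha2, harg]
    -- second minor determinant
    have hd1 : (A.submatrix (Fin.succAbove 1) Fin.succ).det
        = (if h : a ≤ n then (-1 : ℂ) ^ (a + 1 + 1) * N ⟨a, by omega⟩ 0 else 0) := by
      rw [hsub1]
      by_cases h : a ≤ n
      · rw [dif_pos h, ih (a + 1) (by omega) (by omega) (lam * s ^ (-1 : ℤ)), hmu1]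
        rfl
      · rw [dif_neg h]
        apply Matrix.det_eq_zero_of_row_eq_zero 0
        intro j
        simp only [Emat, Matrix.of_apply, Fin.val_zero, if_pos]
        apply hTa1z
        right
        push_cast
        omega
    -- the right-hand side product expansion
    have hRHS : Sprod n τ (s ^ 2) (l + 1 + 1) μ ⟨a - 1, by omega⟩ 0
        = τ (a : ℤ) (lam * s ^ ((l + 1 : ℕ) : ℤ)) * N 0 0
          + (if h : a ≤ n then N ⟨a, by omega⟩ 0 else 0) := by
      have hunf : Sprod n τ (s ^ 2) (l + 1 + 1) μ
          = stokesMat n τ (μ * (s ^ 2) ^ (l + 1)) * N := rfl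
      have hν : μ * (s ^ 2) ^ (l + 1) = lam * s ^ ((l + 1 : ℕ) : ℤ) := by
        rw [hμ, ← pow_mul, mul_assoc, ← zpow_natCast s (2 * (l + 1)), ← zpow_add₀ hs]
        congr 1
        push_cast
        ring
      have hval : ((⟨a - 1, by omega⟩ : Fin (n + 1)) : ℕ) = a - 1 := rfl
      have hval2 : ∀ h : a < n + 1, ((⟨a, h⟩ : Fin (n + 1)) : ℕ) = a := fun _ => rfl
      have hidx : (((a - 1 : ℕ) : ℤ) + 1) = (a : ℤ) := by push_cast [ha1]; ring
      rw [hunf, Matrix.mul_apply]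
      by_cases h : a ≤ n
      · rw [dif_pos h]
        have hne0a : (0 : Fin (n + 1)) ≠ (⟨a, by omega⟩ : Fin (n + 1)) := by
          intro hc
          have : (0 : ℕ) = a := congrArg Fin.val hc
          omega
        have hpt : ∀ k : Fin (n + 1),
            stokesMat n τ (μ * (s ^ 2) ^ (l + 1)) ⟨a - 1, by omega⟩ k * N k 0
            = (if k = 0 then τ (a : ℤ) (lam * s ^ ((l + 1 : ℕ) : ℤ)) * N 0 0 else 0)
              + (if k = (⟨a, by omega⟩ : Fin (n + 1)) then N ⟨a, by omega⟩ 0 else 0) := by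
          intro k
          by_cases hk0 : k = 0
          · subst hk0
            rw [if_pos rfl, if_neg hne0a, add_zero, stokes_col0, hval, hidx, hν]
          · have hk0' : (k : ℕ) ≠ 0 := fun hc => hk0 (Fin.ext hc)
            by_cases hka : k = (⟨a, by omega⟩ : Fin (n + 1))
            · subst hka
              rw [if_neg hk0, if_pos rfl, zero_add,
                stokes_other n τ (μ * (s ^ 2) ^ (l + 1)) ⟨a - 1, by omega⟩ ⟨a, by omega⟩
                  (show a ≠ 0 by omega),
                hval, hval2 (by omega), if_pos (show a = a - 1 + 1 by omega), one_mul]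
            · have hka' : (k : ℕ) ≠ a := fun hc => hka (Fin.ext hc)
              rw [if_neg hk0, if_neg hka,
                stokes_other n τ (μ * (s ^ 2) ^ (l + 1)) ⟨a - 1, by omega⟩ k hk0',
                hval, if_neg (show ¬((k : ℕ) = a - 1 + 1) from fun hc => hka' (by omega)),
                zero_mul, add_zero]
        rw [Finset.sum_congr rfl fun k _ => hpt k, Finset.sum_add_distrib,
          Finset.sum_ite_eq' Finset.univ, Finset.sum_ite_eq' Finset.univ,
          if_pos (Finset.mem_univ _), if_pos (Finset.mem_univ _)]
      · rw [dif_neg h]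
        have hpt : ∀ k : Fin (n + 1),
            stokesMat n τ (μ * (s ^ 2) ^ (l + 1)) ⟨a - 1, by omega⟩ k * N k 0
            = (if k = 0 then τ (a : ℤ) (lam * s ^ ((l + 1 : ℕ) : ℤ)) * N 0 0 else 0) := by
          intro k
          by_cases hk0 : k = 0
          · subst hk0
            rw [if_pos rfl, stokes_col0, hval, hidx, hν]
          · have hk0' : (k : ℕ) ≠ 0 := fun hc => hk0 (Fin.ext hc)
            have hlt := k.isLt
            rw [if_neg hk0,
              stokes_other n τ (μ * (s ^ 2) ^ (l + 1)) ⟨a - 1, by omega⟩ k hk0',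
              hval, if_neg (show ¬((k : ℕ) = a - 1 + 1) from fun hc => by omega),
              zero_mul]
        rw [Finset.sum_congr rfl fun k _ => hpt k, Finset.sum_ite_eq' Finset.univ,
          if_pos (Finset.mem_univ _), add_zero]
    -- assemble
    rw [show Fin.succ (0 : Fin (l + 1)) = (1 : Fin (l + 1 + 1)) from rfl]
    rw [hA00', hA10, hd0, hd1, hRHS]
    rw [show ((0 : Fin (l + 1 + 1)) : ℕ) = 0 from rfl, show ((1 : Fin (l + 1 + 1)) : ℕ) = 1 from rfl]
    by_cases h : a ≤ n
    · rw [dif_pos h, dif_pos h, pow_succ]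
      ring
    · rw [dif_neg h, dif_neg h]
      ring

/-- the main identity (paper eq. (qJT1)).  With
`T^{(1)}_ℓ(λ) := S^{(ℓ)}_{1,1}(λ q^{−(ℓ−1)/2})` and
`T^{(a)}_1(λ) := (−1)^{a+1} τ^{(a)}(λ q^{−(a−1)/2})` (where `s = q^{1/2}`, `q = s²`),
`T^{(1)}_{ℓ+1}` equals the quantum Jacobi-Trudi determinant in the `T^{(a)}_1`. -/
theorem stmt10 (n : ℕ) (τ : ℤ → ℂ → ℂ) (s : ℂ) (hs : s ≠ 0)
    (TL Ta1 : ℤ → ℂ → ℂ)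
    (hTL : ∀ (l : ℕ) (lam : ℂ),
      TL (l : ℤ) lam = Sprod n τ (s ^ 2) l (lam * s ^ (-((l : ℤ) - 1))) 0 0)
    (hTLneg : ∀ l : ℤ, l < 0 → ∀ lam, TL l lam = 0)
    (hTa1 : ∀ a : ℕ, 1 ≤ a → a ≤ n + 1 → ∀ lam : ℂ,
      Ta1 (a : ℤ) lam = (-1 : ℂ) ^ (a + 1) * τ (a : ℤ) (lam * s ^ (-((a : ℤ) - 1))))
    (hTa10 : ∀ lam, Ta1 0 lam = 1)
    (hTa1z : ∀ a : ℤ, (a < 0 ∨ (n : ℤ) + 2 ≤ a) → ∀ lam, Ta1 a lam = 0) :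
    ∀ (l : ℕ) (lam : ℂ),
      TL ((l : ℤ) + 1) lam =
        Matrix.det (Matrix.of fun i j : Fin (l + 1) =>
          Ta1 (1 - (i : ℤ) + (j : ℤ)) (lam * s ^ ((l : ℤ) - (i : ℤ) - (j : ℤ)))) := by
  intro l lam
  have h1 : ((l : ℤ) + 1) = ((l + 1 : ℕ) : ℤ) := by push_cast; ring
  rw [h1, hTL (l + 1) lam]
  have h2 : (Matrix.of fun i j : Fin (l + 1) =>
      Ta1 (1 - (i : ℤ) + (j : ℤ)) (lam * s ^ ((l : ℤ) - (i : ℤ) - (j : ℤ))))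
      = Emat Ta1 s 1 l lam := by
    ext i j
    simp only [Emat, Matrix.of_apply]
    by_cases hi : (i : ℕ) = 0
    · rw [if_pos hi]
      have : ((i : ℕ) : ℤ) = 0 := by exact_mod_cast hi
      rw [show (1 : ℤ) - (i : ℤ) + (j : ℤ) = (1 : ℕ) + (j : ℤ) by omega,
        show ((l : ℤ) - (i : ℤ) - (j : ℤ)) = (l : ℤ) + (1 : ℕ) - 1 - (j : ℤ) by omega]
    · rw [if_neg hi]
  rw [h2, key n τ s hs Ta1 hTa1 hTa10 hTa1z l 1 le_rfl (by omega) lam]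
  have h3 : -(((l : ℕ) + 1 : ℤ) - 1) = -(l : ℤ) := by push_cast; ring
  norm_num [h3]
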